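/- (Monotonicity of the MACO coordinate update.) Fix L ∈ ℝ^{m×r}, R ∈ ℝ^{r×n}, and an index pair (i,k) with 1 ≤ i ≤ m, 1 ≤ k ≤ r. Let W_{ik} := μ + Σ_{j : (i,j)∈𝓔} R_{kj}² + Σ_{j : (i,j)∈𝓛} R_{kj}² + Σ_{j : (i,j)∈𝓤} R_{kj}², and assume W_{ik} > 0. Define g(t) := f(L + t·E_{ik}, R), where E_{ik} is the matrix with 1 in position (i,k) and 0 elsewhere. Then g is convex and differentiable, its derivative g′ is Lipschitz continuous with constant W_{ik}, and the update δ := −g′(0)/W_{ik} satisfies f(L + δ·E_{ik}, R) ≤ f(L, R) − g′(0)²/(2·W_{ik}); in particular the coordinate-descent update never increases the objective f. -/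

import Mathlib

lemma hasDerivAt_max_sq (x : ℝ) : HasDerivAt (fun y : ℝ => max y 0 ^ 2) (2 * max x 0) x := by
  rcases lt_trichotomy x 0 with h | h | h
  · have he : (fun y : ℝ => max y 0 ^ 2) =ᶠ[nhds x] fun _ => (0:ℝ) := by
      filter_upwards [Iio_mem_nhds h] with y (hy : y < 0)
      simp [max_eq_right hy.le]
    rw [max_eq_right h.le, mul_zero]
    exact (hasDerivAt_const x (0:ℝ)).congr_of_eventuallyEq he
  · subst h
    rw [max_self, mul_zero]
    rw [hasDerivAt_iff_tendsto_slope]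
    apply squeeze_zero_norm (a := fun t : ℝ => |t|)
    · intro t
      simp only [slope_def_field, div_eq_mul_inv]
      rw [Real.norm_eq_abs]
      rcases le_or_gt t 0 with ht | ht
      · simp [max_eq_right ht, abs_nonneg]
      · rw [sub_zero, max_eq_left ht.le, max_self]
        have he : ((t:ℝ)^2 - 0^2) * t⁻¹ = t := by field_simp; ring
        rw [he, abs_of_pos ht]
    · have h2 : Filter.Tendsto (fun t : ℝ => |t|) (nhds 0) (nhds 0) := by
        simpa using (continuous_abs.tendsto (0:ℝ))
      exact h2.mono_left nhdsWithin_le_nhds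
  · have he : (fun y : ℝ => max y 0 ^ 2) =ᶠ[nhds x] fun y => y ^ 2 := by
      filter_upwards [Ioi_mem_nhds h] with y (hy : 0 < y)
      simp [max_eq_left hy.le]
    rw [max_eq_left h.le]
    have := hasDerivAt_pow 2 x
    simpa [mul_comm] using this.congr_of_eventuallyEq he

lemma hasDerivAt_max_affine_sq (a b t : ℝ) :
    HasDerivAt (fun s : ℝ => max (a * s + b) 0 ^ 2) (2 * a * max (a * t + b) 0) t := by
  have h1 : HasDerivAt (fun s : ℝ => a * s + b) a t := by
    simpa using ((hasDerivAt_id t).const_mul a).add_const b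
  have := (hasDerivAt_max_sq (a * t + b)).comp t h1
  simpa [Function.comp_def, mul_comm, mul_assoc, mul_left_comm] using this

lemma mono_amax (a b : ℝ) {s t : ℝ} (hst : s ≤ t) :
    a * max (a * s + b) 0 ≤ a * max (a * t + b) 0 := by
  rcases le_or_gt 0 a with ha | ha
  · exact mul_le_mul_of_nonneg_left (max_le_max (by nlinarith) le_rfl) ha
  · exact mul_le_mul_of_nonpos_left (max_le_max (by nlinarith) le_rfl) ha.le

lemma lip_amax (a b : ℝ) (s t : ℝ) :
    |a * max (a * s + b) 0 - a * max (a * t + b) 0| ≤ a ^ 2 * |s - t| := by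
  rw [← mul_sub, abs_mul]
  calc |a| * |max (a * s + b) 0 - max (a * t + b) 0|
      ≤ |a| * |(a * s + b) - (a * t + b)| := by
        apply mul_le_mul_of_nonneg_left (abs_max_sub_max_le_abs _ _ _) (abs_nonneg a)
    _ = a ^ 2 * |s - t| := by
        rw [show (a * s + b) - (a * t + b) = a * (s - t) by ring, abs_mul, ← mul_assoc,
          ← abs_mul, ← pow_two]
        rw [abs_of_nonneg (sq_nonneg a)]



/-- The inequality-constrained matrix-completion objective
`f(L,R) = ½Σ_𝓔 (L_{i:}R_{:j} − X^𝓔)² + ½Σ_𝓛 ((X^𝓛 − L_{i:}R_{:j})₊)²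
 + ½Σ_𝓤 ((L_{i:}R_{:j} − X^𝓤)₊)² + (μ/2)‖L‖_F² + (μ/2)‖R‖_F²`. -/
noncomputable def macoF (m n r : ℕ) (E Lb Ub : Finset (Fin m × Fin n))
    (XE XL XU : Fin m × Fin n → ℝ) (μ : ℝ)
    (A : Fin m → Fin r → ℝ) (B : Fin r → Fin n → ℝ) : ℝ :=
  (1 / 2) * ∑ p ∈ E, ((∑ k, A p.1 k * B k p.2) - XE p) ^ 2
  + (1 / 2) * ∑ p ∈ Lb, (max (XL p - ∑ k, A p.1 k * B k p.2) 0) ^ 2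
  + (1 / 2) * ∑ p ∈ Ub, (max ((∑ k, A p.1 k * B k p.2) - XU p) 0) ^ 2
  + (μ / 2) * ∑ i, ∑ k, (A i k) ^ 2
  + (μ / 2) * ∑ k, ∑ j, (B k j) ^ 2

/-- Monotonicity of the MACO coordinate update: along the `(i,k)` coordinate of `L`
the objective `g(t) = f(L + t·E_{ik}, R)` is convex and differentiable with
`W_{ik}`-Lipschitz derivative, and the update `δ = −g′(0)/W_{ik}` decreases the
objective by at least `g′(0)²/(2 W_{ik})`. -/
theorem macoF_coordinate_update_decrease
    (m n r : ℕ) (hm : 1 ≤ m) (hn : 1 ≤ n) (hr : 1 ≤ r)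
    (E Lb Ub : Finset (Fin m × Fin n)) (XE XL XU : Fin m × Fin n → ℝ)
    (μ : ℝ) (hμ : 0 ≤ μ)
    (L : Fin m → Fin r → ℝ) (B : Fin r → Fin n → ℝ) (i : Fin m) (k : Fin r)
    (W : ℝ)
    (hW : W = μ + (∑ p ∈ E.filter (fun p => p.1 = i), (B k p.2) ^ 2)
        + (∑ p ∈ Lb.filter (fun p => p.1 = i), (B k p.2) ^ 2)
        + (∑ p ∈ Ub.filter (fun p => p.1 = i), (B k p.2) ^ 2))
    (hWpos : 0 < W)
    (g : ℝ → ℝ)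
    (hg : g = fun t : ℝ => macoF m n r E Lb Ub XE XL XU μ
        (L + t • fun i' k' => if i' = i ∧ k' = k then (1 : ℝ) else 0) B) :
    ConvexOn ℝ Set.univ g ∧ Differentiable ℝ g ∧
    LipschitzWith W.toNNReal (deriv g) ∧
    g (-(deriv g 0) / W) ≤ g 0 - (deriv g 0) ^ 2 / (2 * W) := by
  set a : Fin m × Fin n → ℝ := fun p => if p.1 = i then B k p.2 else 0 with ha
  set c : Fin m × Fin n → ℝ := fun p => ∑ k', L p.1 k' * B k' p.2 with hc
  -- inner products
  have hsum : ∀ (t : ℝ) (p : Fin m × Fin n),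
      (∑ k', (L + t • fun i' k' => if i' = i ∧ k' = k then (1 : ℝ) else 0) p.1 k' * B k' p.2)
        = a p * t + c p := by
    intro t p
    simp only [Pi.add_apply, Pi.smul_apply, smul_eq_mul, add_mul, Finset.sum_add_distrib]
    by_cases h : p.1 = i
    · simp [ha, hc, h, ite_and, mul_ite, Finset.sum_ite_eq', mul_comm, add_comm]
    · simp [ha, hc, h, add_comm]
  have hreg : ∀ t : ℝ,
      (∑ i', ∑ k', ((L + t • fun i' k' => if i' = i ∧ k' = k then (1 : ℝ) else 0) i' k') ^ 2)
        = (∑ i', ∑ k', (L i' k') ^ 2) + (2 * L i k * t + t ^ 2) := by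
    intro t
    simp only [Pi.add_apply, Pi.smul_apply, smul_eq_mul]
    have expand : ∀ (x : Fin m) (y : Fin r), (L x y + t * if x = i ∧ y = k then (1:ℝ) else 0) ^ 2
        = L x y ^ 2 + (if x = i ∧ y = k then 2 * L i k * t + t ^ 2 else 0) := by
      intro x y
      by_cases h : x = i ∧ y = k
      · obtain ⟨h1, h2⟩ := h; subst h1; subst h2; simp; ring
      · simp [h]
    simp only [expand, Finset.sum_add_distrib]
    congr 1
    simp [ite_and, Finset.sum_ite_eq, Finset.sum_ite_eq']
  -- explicit form of g
  have hgform : g = fun t : ℝ =>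
      (1/2) * ∑ p ∈ E, (a p * t + (c p - XE p)) ^ 2
      + (1/2) * ∑ p ∈ Lb, (max ((-(a p)) * t + (XL p - c p)) 0) ^ 2
      + (1/2) * ∑ p ∈ Ub, (max (a p * t + (c p - XU p)) 0) ^ 2
      + (μ/2) * ((∑ i', ∑ k', (L i' k') ^ 2) + (2 * L i k * t + t ^ 2))
      + (μ/2) * ∑ k', ∑ j', (B k' j') ^ 2 := by
    rw [hg]; funext t; unfold macoF
    rw [hreg]
    have e1 : ∀ p : Fin m × Fin n, (a p * t + c p - XE p) ^ 2 = (a p * t + (c p - XE p)) ^ 2 := by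
      intro p; ring
    have e2 : ∀ p : Fin m × Fin n,
        max (XL p - (a p * t + c p)) 0 = max ((-(a p)) * t + (XL p - c p)) 0 := by
      intro p; congr 1; ring
    have e3 : ∀ p : Fin m × Fin n,
        max (a p * t + c p - XU p) 0 = max (a p * t + (c p - XU p)) 0 := by
      intro p; congr 1; ring
    simp only [hsum, e1, e2, e3]
  -- the derivative
  set G : ℝ → ℝ := fun t =>
      (∑ p ∈ E, a p * (a p * t + (c p - XE p)))
      + (∑ p ∈ Lb, (-(a p)) * max ((-(a p)) * t + (XL p - c p)) 0)
      + (∑ p ∈ Ub, a p * max (a p * t + (c p - XU p)) 0)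
      + μ * (L i k + t) with hGdef
  have hG : ∀ t : ℝ, HasDerivAt g (G t) t := by
    intro t
    rw [hgform]
    have h1 : HasDerivAt (fun t : ℝ => (1/2) * ∑ p ∈ E, (a p * t + (c p - XE p)) ^ 2)
        (∑ p ∈ E, a p * (a p * t + (c p - XE p))) t := by
      have := (HasDerivAt.fun_sum (fun p (_ : p ∈ E) => by
        have hb : HasDerivAt (fun s : ℝ => a p * s + (c p - XE p)) (a p) t := by
          simpa using ((hasDerivAt_id t).const_mul (a p)).add_const (c p - XE p)
        exact hb.pow 2)).const_mul (1/2 : ℝ)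
      refine this.congr_deriv ?_
      rw [Finset.mul_sum]
      exact Finset.sum_congr rfl fun p _ => by push_cast; ring
    have h2 : HasDerivAt (fun t : ℝ => (1/2) * ∑ p ∈ Lb, (max ((-(a p)) * t + (XL p - c p)) 0) ^ 2)
        (∑ p ∈ Lb, (-(a p)) * max ((-(a p)) * t + (XL p - c p)) 0) t := by
      have := (HasDerivAt.fun_sum (fun p (_ : p ∈ Lb) =>
        hasDerivAt_max_affine_sq (-(a p)) (XL p - c p) t)).const_mul (1/2 : ℝ)
      refine this.congr_deriv ?_
      rw [Finset.mul_sum]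
      exact Finset.sum_congr rfl fun p _ => by ring
    have h3 : HasDerivAt (fun t : ℝ => (1/2) * ∑ p ∈ Ub, (max (a p * t + (c p - XU p)) 0) ^ 2)
        (∑ p ∈ Ub, a p * max (a p * t + (c p - XU p)) 0) t := by
      have := (HasDerivAt.fun_sum (fun p (_ : p ∈ Ub) =>
        hasDerivAt_max_affine_sq (a p) (c p - XU p) t)).const_mul (1/2 : ℝ)
      refine this.congr_deriv ?_
      rw [Finset.mul_sum]
      exact Finset.sum_congr rfl fun p _ => by ring
    have h4 : HasDerivAt (fun t : ℝ =>
        (μ/2) * ((∑ i', ∑ k', (L i' k') ^ 2) + (2 * L i k * t + t ^ 2)))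
        (μ * (L i k + t)) t := by
      have hb : HasDerivAt (fun t : ℝ => (∑ i', ∑ k', (L i' k') ^ 2) + (2 * L i k * t + t ^ 2))
          (2 * L i k + 2 * t) t := by
        have hp : HasDerivAt (fun t : ℝ => t ^ 2) (2 * t) t := by
          simpa using hasDerivAt_pow 2 t
        have := (((hasDerivAt_id t).const_mul (2 * L i k)).add hp).const_add
          (∑ i', ∑ k', (L i' k') ^ 2)
        simpa using this
      have := hb.const_mul (μ/2 : ℝ)
      refine this.congr_deriv ?_
      ring
    have h5 : HasDerivAt (fun _ : ℝ => (μ/2) * ∑ k', ∑ j', (B k' j') ^ 2) 0 t :=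
      hasDerivAt_const _ _
    have := (((h1.fun_add h2).fun_add h3).fun_add h4).fun_add h5
    simpa [hGdef] using this
  have hdiff : Differentiable ℝ g := fun t => (hG t).differentiableAt
  have hderiv : deriv g = G := funext fun t => (hG t).deriv
  have hasq : ∀ (S : Finset (Fin m × Fin n)),
      (∑ p ∈ S, (a p) ^ 2) = ∑ p ∈ S.filter (fun p => p.1 = i), (B k p.2) ^ 2 := by
    intro S
    rw [Finset.sum_filter]
    exact Finset.sum_congr rfl fun p _ => by by_cases h : p.1 = i <;> simp [ha, h]
  have hWsum : W = μ + (∑ p ∈ E, (a p) ^ 2) + (∑ p ∈ Lb, (a p) ^ 2) + (∑ p ∈ Ub, (a p) ^ 2) := by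
    rw [hW, hasq, hasq, hasq]
  -- Lipschitz bound for G
  have hlipG : ∀ s t : ℝ, |G s - G t| ≤ W * |s - t| := by
    intro s t
    have hE : |(∑ p ∈ E, a p * (a p * s + (c p - XE p)))
        - ∑ p ∈ E, a p * (a p * t + (c p - XE p))| ≤ (∑ p ∈ E, (a p) ^ 2) * |s - t| := by
      rw [← Finset.sum_sub_distrib, Finset.sum_mul]
      refine (Finset.abs_sum_le_sum_abs _ _).trans (Finset.sum_le_sum fun p _ => ?_)
      rw [show a p * (a p * s + (c p - XE p)) - a p * (a p * t + (c p - XE p))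
          = a p ^ 2 * (s - t) by ring, abs_mul, abs_of_nonneg (sq_nonneg _)]
    have hLb : |(∑ p ∈ Lb, (-(a p)) * max ((-(a p)) * s + (XL p - c p)) 0)
        - ∑ p ∈ Lb, (-(a p)) * max ((-(a p)) * t + (XL p - c p)) 0|
        ≤ (∑ p ∈ Lb, (a p) ^ 2) * |s - t| := by
      rw [← Finset.sum_sub_distrib, Finset.sum_mul]
      refine (Finset.abs_sum_le_sum_abs _ _).trans (Finset.sum_le_sum fun p _ => ?_)
      have := lip_amax (-(a p)) (XL p - c p) s t
      simpa [neg_pow] using this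
    have hUb : |(∑ p ∈ Ub, a p * max (a p * s + (c p - XU p)) 0)
        - ∑ p ∈ Ub, a p * max (a p * t + (c p - XU p)) 0|
        ≤ (∑ p ∈ Ub, (a p) ^ 2) * |s - t| := by
      rw [← Finset.sum_sub_distrib, Finset.sum_mul]
      refine (Finset.abs_sum_le_sum_abs _ _).trans (Finset.sum_le_sum fun p _ => ?_)
      exact lip_amax (a p) (c p - XU p) s t
    have hmu : |μ * (L i k + s) - μ * (L i k + t)| ≤ μ * |s - t| := by
      rw [show μ * (L i k + s) - μ * (L i k + t) = μ * (s - t) by ring, abs_mul,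
        abs_of_nonneg hμ]
    have decomp : G s - G t =
        ((∑ p ∈ E, a p * (a p * s + (c p - XE p))) - ∑ p ∈ E, a p * (a p * t + (c p - XE p)))
        + ((∑ p ∈ Lb, (-(a p)) * max ((-(a p)) * s + (XL p - c p)) 0)
            - ∑ p ∈ Lb, (-(a p)) * max ((-(a p)) * t + (XL p - c p)) 0)
        + ((∑ p ∈ Ub, a p * max (a p * s + (c p - XU p)) 0)
            - ∑ p ∈ Ub, a p * max (a p * t + (c p - XU p)) 0)
        + (μ * (L i k + s) - μ * (L i k + t)) := by
      simp only [hGdef]; ring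
    have hsum4 : |G s - G t| ≤ (∑ p ∈ E, (a p) ^ 2) * |s - t| + (∑ p ∈ Lb, (a p) ^ 2) * |s - t|
        + (∑ p ∈ Ub, (a p) ^ 2) * |s - t| + μ * |s - t| := by
      rw [decomp]
      refine (abs_add_le _ _).trans (add_le_add ?_ hmu)
      refine (abs_add_le _ _).trans (add_le_add ?_ hUb)
      exact (abs_add_le _ _).trans (add_le_add hE hLb)
    exact hsum4.trans (le_of_eq (by rw [hWsum]; ring))
  have hlip : LipschitzWith W.toNNReal (deriv g) := by
    rw [hderiv]
    apply LipschitzWith.of_dist_le_mul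
    intro x y
    rw [Real.dist_eq, Real.dist_eq, Real.coe_toNNReal _ hWpos.le]
    exact hlipG x y
  -- monotonicity of G, hence convexity of g
  have hmonoG : Monotone G := by
    intro s t hst
    simp only [hGdef]
    apply add_le_add (add_le_add (add_le_add ?_ ?_) ?_) ?_
    · refine Finset.sum_le_sum fun p _ => ?_
      nlinarith [mul_le_mul_of_nonneg_left hst (sq_nonneg (a p))]
    · exact Finset.sum_le_sum fun p _ => mono_amax (-(a p)) (XL p - c p) hst
    · exact Finset.sum_le_sum fun p _ => mono_amax (a p) (c p - XU p) hst
    · nlinarith [mul_le_mul_of_nonneg_left hst hμ]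
  have hconv : ConvexOn ℝ Set.univ g :=
    Monotone.convexOn_univ_of_deriv hdiff (hderiv ▸ hmonoG)
  -- quadratic upper bound from the Lipschitz derivative
  have hquad : ∀ t : ℝ, g t ≤ g 0 + G 0 * t + W / 2 * t ^ 2 := by
    intro t
    set φ : ℝ → ℝ := fun s => g 0 + G 0 * s + W / 2 * s ^ 2 - g s with hφdef
    have hφd : ∀ x : ℝ, HasDerivAt φ (G 0 + W * x - G x) x := by
      intro x
      have hp : HasDerivAt (fun s : ℝ => s ^ 2) (2 * x) x := by simpa using hasDerivAt_pow 2 x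
      have h1 : HasDerivAt (fun s : ℝ => g 0 + G 0 * s + W / 2 * s ^ 2) (G 0 + W * x) x := by
        have := (((hasDerivAt_id x).const_mul (G 0)).const_add (g 0)).add (hp.const_mul (W/2))
        refine this.congr_deriv ?_; ring
      exact h1.sub (hG x)
    have hφc : Continuous φ := by
      have hd : Differentiable ℝ φ := fun x => (hφd x).differentiableAt
      exact hd.continuous
    have hφ0 : φ 0 = 0 := by simp [hφdef]
    have key : (0 : ℝ) ≤ φ t := by
      rcases le_total 0 t with ht | ht
      · have hm2 : MonotoneOn φ (Set.Icc 0 t) := by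
          apply monotoneOn_of_hasDerivWithinAt_nonneg (convex_Icc 0 t) hφc.continuousOn
            (fun x _ => (hφd x).hasDerivWithinAt)
          intro x hx
          rw [interior_Icc] at hx
          have h1 : G x - G 0 ≤ W * |x - 0| := (le_abs_self _).trans (hlipG x 0)
          rw [sub_zero, abs_of_pos hx.1] at h1
          linarith
        have := hm2 (Set.left_mem_Icc.2 ht) (Set.right_mem_Icc.2 ht) ht
        linarith
      · have hm2 : AntitoneOn φ (Set.Icc t 0) := by
          apply antitoneOn_of_hasDerivWithinAt_nonpos (convex_Icc t 0) hφc.continuousOn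
            (fun x _ => (hφd x).hasDerivWithinAt)
          intro x hx
          rw [interior_Icc] at hx
          have h1 : G 0 - G x ≤ W * |0 - x| := (le_abs_self _).trans (hlipG 0 x)
          rw [zero_sub, abs_neg, abs_of_neg hx.2] at h1
          linarith
        have := hm2 (Set.left_mem_Icc.2 ht) (Set.right_mem_Icc.2 ht) ht
        linarith
    simp only [hφdef] at key
    linarith
  have hd0 : deriv g 0 = G 0 := by rw [hderiv]
  refine ⟨hconv, hdiff, hlip, ?_⟩
  rw [hd0]
  have hfinal := hquad (-(G 0) / W)
  have heq : g 0 + G 0 * (-(G 0) / W) + W / 2 * (-(G 0) / W) ^ 2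
      = g 0 - (G 0) ^ 2 / (2 * W) := by
    field_simp
    ring
  linarith
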